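/- Let T > 0, n ∈ ℕ, let D : ℝⁿ → ℝⁿ be a linear map with operator norm ‖D‖ ≤ ρ₁ < 1 (with respect to the Euclidean norm), and let Φ : [0,T] → (linear maps ℝⁿ → ℝⁿ) be continuous. Suppose (f_k)_{k∈ℕ} is a sequence of continuous functions [0,T] → ℝⁿ satisfying f_{k+1}(t) = D(f_k(t)) + ∫₀ᵗ Φ(t−τ)(f_k(τ)) dτ for all t ∈ [0,T] and all k. Then there exist λ > 0 and ρ ∈ [0,1) such that ‖f_k‖_λ ≤ ρᵏ·‖f₀‖_λ for all k ∈ ℕ; in particular f_k converges to 0 uniformly on [0,T]. -/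

import Mathlib

open MeasureTheory Set Filter

/-- If `‖D‖ ≤ ρ₁ < 1` and `f_{k+1}(t) = D (f_k t) + ∫₀ᵗ Φ(t-τ)(f_k τ) dτ`,
then for a suitable `λ > 0` there is `ρ ∈ [0,1)` with `‖f_k‖_λ ≤ ρᵏ ‖f₀‖_λ`; in particular
`f_k → 0` uniformly on `[0,T]`. -/
theorem lambda_norm_geometric_decay
    (T : ℝ) (hT : 0 < T) (n : ℕ) (ρ₁ : ℝ) (hρ₁ : ρ₁ < 1)
    (D : EuclideanSpace ℝ (Fin n) →L[ℝ] EuclideanSpace ℝ (Fin n)) (hD : ‖D‖ ≤ ρ₁)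
    (Φ : ℝ → (EuclideanSpace ℝ (Fin n) →L[ℝ] EuclideanSpace ℝ (Fin n)))
    (hΦcont : ContinuousOn Φ (Icc 0 T))
    (f : ℕ → ℝ → EuclideanSpace ℝ (Fin n))
    (hfcont : ∀ k, ContinuousOn (f k) (Icc 0 T))
    (hrec : ∀ k, ∀ t ∈ Icc (0:ℝ) T,
      f (k + 1) t = D (f k t) + ∫ τ in (0:ℝ)..t, (Φ (t - τ)) (f k τ)) :
    (∃ lam : ℝ, 0 < lam ∧ ∃ ρ : ℝ, ρ ∈ Ico (0:ℝ) 1 ∧ ∀ k : ℕ,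
        (⨆ t : Icc (0:ℝ) T, Real.exp (-lam * t) * ‖f k t‖) ≤
          ρ ^ k * ⨆ t : Icc (0:ℝ) T, Real.exp (-lam * t) * ‖f 0 t‖) ∧
      TendstoUniformlyOn f 0 atTop (Icc 0 T) := by
  have hρ₁0 : 0 ≤ ρ₁ := le_trans (norm_nonneg D) hD
  -- bound on Φ
  obtain ⟨M0, hM0⟩ := isCompact_Icc.exists_bound_of_continuousOn hΦcont
  set M : ℝ := max M0 0 with hMdef
  have hM : ∀ s ∈ Icc (0:ℝ) T, ‖Φ s‖ ≤ M := fun s hs => (hM0 s hs).trans (le_max_left _ _)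
  have hM0' : 0 ≤ M := le_max_right _ _
  set lam : ℝ := max 1 (2 * M / (1 - ρ₁)) with hlamdef
  have hlam1 : (1:ℝ) ≤ lam := le_max_left _ _
  have hlam0 : 0 < lam := lt_of_lt_of_le one_pos hlam1
  have hone : (0:ℝ) < 1 - ρ₁ := by linarith
  have hMlam : M / lam ≤ (1 - ρ₁) / 2 := by
    rw [div_le_iff₀ hlam0]
    have h2 : 2 * M / (1 - ρ₁) ≤ lam := le_max_right _ _
    calc M = (1 - ρ₁) / 2 * (2 * M / (1 - ρ₁)) := by field_simp
      _ ≤ (1 - ρ₁) / 2 * lam := by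
          apply mul_le_mul_of_nonneg_left h2 (by linarith)
  set ρ : ℝ := ρ₁ + M / lam with hρdef
  have hρ0 : 0 ≤ ρ := add_nonneg hρ₁0 (div_nonneg hM0' hlam0.le)
  have hρlt : ρ < 1 := by
    have h1 : ρ ≤ ρ₁ + (1 - ρ₁) / 2 := add_le_add le_rfl hMlam
    have h2 : ρ₁ + (1 - ρ₁) / 2 < 1 := by linarith
    exact lt_of_le_of_lt h1 h2
  set N : ℕ → ℝ := fun k => ⨆ t : Icc (0:ℝ) T, Real.exp (-lam * t) * ‖f k t‖ with hNdef
  have hne : Nonempty (Icc (0:ℝ) T) := ⟨⟨0, le_refl 0, hT.le⟩⟩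
  have hbdd : ∀ k, BddAbove (range fun t : Icc (0:ℝ) T => Real.exp (-lam * t) * ‖f k t‖) := by
    intro k
    obtain ⟨C, hC⟩ := isCompact_Icc.exists_bound_of_continuousOn (hfcont k)
    refine ⟨max C 0, ?_⟩
    rintro _ ⟨⟨t, ht⟩, rfl⟩
    have h1 : Real.exp (-lam * t) ≤ 1 := by
      apply Real.exp_le_one_iff.mpr
      have : 0 ≤ lam * t := mul_nonneg hlam0.le ht.1
      linarith
    calc Real.exp (-lam * t) * ‖f k t‖ ≤ 1 * max C 0 := by
          apply mul_le_mul h1 ((hC t ht).trans (le_max_left _ _)) (norm_nonneg _)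
            zero_le_one
      _ = max C 0 := one_mul _
  have hNle : ∀ k, ∀ t ∈ Icc (0:ℝ) T, Real.exp (-lam * t) * ‖f k t‖ ≤ N k := by
    intro k t ht
    exact le_ciSup (hbdd k) (⟨t, ht⟩ : Icc (0:ℝ) T)
  have hN0 : ∀ k, 0 ≤ N k := by
    intro k
    refine le_trans ?_ (hNle k 0 ⟨le_refl 0, hT.le⟩)
    positivity
  -- key step
  have hstep : ∀ k, N (k + 1) ≤ ρ * N k := by
    intro k
    apply ciSup_le
    rintro ⟨t, ht⟩
    have ht0 : (0:ℝ) ≤ t := ht.1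
    have htT : t ≤ T := ht.2
    rw [hrec k t ht]
    -- norm of the integral
    have hfk : ∀ τ ∈ Icc (0:ℝ) T, ‖f k τ‖ ≤ Real.exp (lam * τ) * N k := by
      intro τ hτ
      have h := hNle k τ hτ
      have he : Real.exp (-lam * τ) * Real.exp (lam * τ) = 1 := by
        rw [← Real.exp_add]; simp
      calc ‖f k τ‖ = Real.exp (lam * τ) * (Real.exp (-lam * τ) * ‖f k τ‖) := by
            rw [← mul_assoc, mul_comm (Real.exp (lam * τ)), he, one_mul]
        _ ≤ Real.exp (lam * τ) * N k := by
            apply mul_le_mul_of_nonneg_left h (Real.exp_pos _).le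
    have hIbound : ‖∫ τ in (0:ℝ)..t, (Φ (t - τ)) (f k τ)‖ ≤
        M * N k / lam * Real.exp (lam * t) := by
      have hbound_int : IntervalIntegrable (fun τ => M * N k * Real.exp (lam * τ))
          volume 0 t := by
        apply Continuous.intervalIntegrable
        fun_prop
      have hptwise : ∀ᵐ τ ∂(volume.restrict (Set.uIoc (0:ℝ) t)),
          ‖(Φ (t - τ)) (f k τ)‖ ≤ M * N k * Real.exp (lam * τ) := by
        filter_upwards [ae_restrict_mem measurableSet_uIoc] with τ hτ
        rw [uIoc_of_le ht0] at hτ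
        have hτmem : τ ∈ Icc (0:ℝ) T := ⟨hτ.1.le, hτ.2.trans htT⟩
        have hsub : t - τ ∈ Icc (0:ℝ) T := ⟨by linarith [hτ.2], by linarith [hτ.1]⟩
        calc ‖(Φ (t - τ)) (f k τ)‖ ≤ ‖Φ (t - τ)‖ * ‖f k τ‖ :=
              (Φ (t - τ)).le_opNorm _
          _ ≤ M * (Real.exp (lam * τ) * N k) := by
              apply mul_le_mul (hM _ hsub) (hfk τ hτmem) (norm_nonneg _) hM0'
          _ = M * N k * Real.exp (lam * τ) := by ring
      have hkey := intervalIntegral.norm_integral_le_abs_of_norm_le hptwise hbound_int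
      have hcalc : ∫ τ in (0:ℝ)..t, M * N k * Real.exp (lam * τ) =
          M * N k * ((Real.exp (lam * t) - 1) / lam) := by
        rw [intervalIntegral.integral_const_mul]
        congr 1
        have hderiv : ∀ x ∈ uIcc (0:ℝ) t, HasDerivAt (fun y => Real.exp (lam * y) / lam)
            (Real.exp (lam * x)) x := by
          intro x _
          have h1 : HasDerivAt (fun y : ℝ => lam * y) lam x := by
            simpa using (hasDerivAt_id x).const_mul lam
          have h2 := (Real.hasDerivAt_exp (lam * x)).comp x h1
          have h3 := h2.div_const lam
          simpa [mul_div_assoc, mul_div_cancel_right₀ _ hlam0.ne'] using h3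
        rw [intervalIntegral.integral_eq_sub_of_hasDerivAt hderiv
          (by apply Continuous.intervalIntegrable; fun_prop)]
        simp [sub_div]
      have habs : |∫ τ in (0:ℝ)..t, M * N k * Real.exp (lam * τ)| ≤
          M * N k / lam * Real.exp (lam * t) := by
        rw [hcalc, abs_of_nonneg]
        · have heq : M * N k / lam * Real.exp (lam * t) =
              M * N k * (Real.exp (lam * t) / lam) := by ring
          rw [heq]
          have h2 : 0 ≤ M * N k := mul_nonneg hM0' (hN0 k)
          apply mul_le_mul_of_nonneg_left _ h2
          rw [div_le_div_iff_of_pos_right hlam0]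
          linarith
        · apply mul_nonneg (mul_nonneg hM0' (hN0 k))
          apply div_nonneg _ hlam0.le
          have : (1:ℝ) ≤ Real.exp (lam * t) := by
            rw [← Real.exp_zero]
            exact Real.exp_le_exp.mpr (mul_nonneg hlam0.le ht0)
          linarith
      exact hkey.trans habs
    have hexp1 : Real.exp (-lam * t) * Real.exp (lam * t) = 1 := by
      rw [← Real.exp_add]; simp
    calc Real.exp (-lam * t) * ‖D (f k t) + ∫ τ in (0:ℝ)..t, (Φ (t - τ)) (f k τ)‖
        ≤ Real.exp (-lam * t) * (‖D (f k t)‖ +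
            ‖∫ τ in (0:ℝ)..t, (Φ (t - τ)) (f k τ)‖) := by
          apply mul_le_mul_of_nonneg_left (norm_add_le _ _) (Real.exp_pos _).le
      _ ≤ Real.exp (-lam * t) * (ρ₁ * ‖f k t‖ + M * N k / lam * Real.exp (lam * t)) := by
          apply mul_le_mul_of_nonneg_left _ (Real.exp_pos _).le
          apply add_le_add _ hIbound
          calc ‖D (f k t)‖ ≤ ‖D‖ * ‖f k t‖ := D.le_opNorm _
            _ ≤ ρ₁ * ‖f k t‖ := mul_le_mul_of_nonneg_right hD (norm_nonneg _)
      _ = ρ₁ * (Real.exp (-lam * t) * ‖f k t‖) +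
            M * N k / lam * (Real.exp (-lam * t) * Real.exp (lam * t)) := by ring
      _ ≤ ρ₁ * N k + M * N k / lam * 1 := by
          apply add_le_add
          · exact mul_le_mul_of_nonneg_left (hNle k t ht) hρ₁0
          · rw [hexp1]
      _ = ρ * N k := by rw [hρdef]; ring
  have hgeom : ∀ k, N k ≤ ρ ^ k * N 0 := by
    intro k
    induction k with
    | zero => simp
    | succ k ih =>
      calc N (k + 1) ≤ ρ * N k := hstep k
        _ ≤ ρ * (ρ ^ k * N 0) := mul_le_mul_of_nonneg_left ih hρ0
        _ = ρ ^ (k + 1) * N 0 := by ring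
  refine ⟨⟨lam, hlam0, ρ, ⟨hρ0, hρlt⟩, hgeom⟩, ?_⟩
  -- uniform convergence
  rw [Metric.tendstoUniformlyOn_iff]
  intro ε hε
  have htend : Tendsto (fun k => Real.exp (lam * T) * (ρ ^ k * N 0)) atTop (nhds 0) := by
    have := tendsto_pow_atTop_nhds_zero_of_lt_one hρ0 hρlt
    have h2 := (this.mul_const (N 0)).const_mul (Real.exp (lam * T))
    simpa using h2
  filter_upwards [(htend.eventually (gt_mem_nhds hε))] with k hk t ht
  simp only [Pi.zero_apply, dist_zero_left]
  have h1 : Real.exp (-lam * t) * ‖f k t‖ ≤ ρ ^ k * N 0 := (hNle k t ht).trans (hgeom k)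
  have hexp1 : Real.exp (-lam * t) * Real.exp (lam * t) = 1 := by
    rw [← Real.exp_add]; simp
  have h2 : ‖f k t‖ ≤ Real.exp (lam * t) * (ρ ^ k * N 0) := by
    calc ‖f k t‖ = Real.exp (lam * t) * (Real.exp (-lam * t) * ‖f k t‖) := by
          rw [← mul_assoc, mul_comm (Real.exp (lam * t)), hexp1, one_mul]
      _ ≤ Real.exp (lam * t) * (ρ ^ k * N 0) :=
          mul_le_mul_of_nonneg_left h1 (Real.exp_pos _).le
  have h3 : Real.exp (lam * t) ≤ Real.exp (lam * T) :=
    Real.exp_le_exp.mpr (mul_le_mul_of_nonneg_left ht.2 hlam0.le)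
  have h4 : ρ ^ k * N 0 ≥ 0 := mul_nonneg (pow_nonneg hρ0 k) (hN0 0)
  calc ‖f k t‖ ≤ Real.exp (lam * t) * (ρ ^ k * N 0) := h2
    _ ≤ Real.exp (lam * T) * (ρ ^ k * N 0) := mul_le_mul_of_nonneg_right h3 h4
    _ < ε := hk
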